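/- Let n = 2^L with L ≥ 2, and let {ψ_i}_{i=1}^n be an orthonormal basis of ℝ^n with overlap at most K such that for every p ∈ [1,∞] with Hölder conjugate p', ‖ψ_k‖_p · ‖ψ_k‖_{p'} ≤ M holds for every k. Let f ∈ ℝ^n and B ≤ n. For each t = 0, 1, …, L(L−1) set p_t = 1 + t/L with conjugate p'_t, and let S_t be a set of B indices of the B largest values of |⟨f, ψ_k⟩| / ‖ψ_k‖_{p'_t}. Let S = ∪_t S_t (so |S| ≤ B·L²) and f̂_u = Σ_{i∈S} ⟨f, ψ_i⟩ ψ_i. Then for every p ∈ [1,∞): ‖f − f̂_u‖_p ≤ 2·M·K·E_p, where E_p = min over B-sparse z of ‖f − Σ_i z_i ψ_i‖_p. -/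

import Mathlib

open scoped ENNReal

/-- Standard inner product on `ℝ^n`. -/
noncomputable def dotp {n : ℕ} (x y : Fin n → ℝ) : ℝ := ∑ j, x j * y j

/-- The `ℓ_p` norm on `ℝ^n`, for `p ∈ [1, ∞]` (extended-real exponent). -/
noncomputable def lpNorm {n : ℕ} (p : ℝ≥0∞) (x : Fin n → ℝ) : ℝ :=
  if p = ∞ then ⨆ j, |x j| else (∑ j, |x j| ^ p.toReal) ^ (1 / p.toReal)

/-- A vector is `B`-sparse if it has at most `B` nonzero components. -/
def Sparse {n : ℕ} (B : ℕ) (z : Fin n → ℝ) : Prop :=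
  ({i | z i ≠ 0} : Set (Fin n)).ncard ≤ B

namespace S9
open Finset

variable {n : ℕ}

lemma sum_rpow_nonneg (x : Fin n → ℝ) (r : ℝ) : 0 ≤ ∑ j, |x j| ^ r :=
  Finset.sum_nonneg fun _ _ => Real.rpow_nonneg (abs_nonneg _) _

lemma np_nonneg (x : Fin n → ℝ) (r : ℝ) : 0 ≤ (∑ j, |x j| ^ r) ^ (1/r) :=
  Real.rpow_nonneg (sum_rpow_nonneg x r) _

lemma np_rpow (x : Fin n → ℝ) {r : ℝ} (hr : r ≠ 0) :
    ((∑ j, |x j| ^ r) ^ (1/r)) ^ r = ∑ j, |x j| ^ r := by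
  rw [← Real.rpow_mul (sum_rpow_nonneg x r), one_div, inv_mul_cancel₀ hr, Real.rpow_one]

lemma term_le_np (x : Fin n → ℝ) {r : ℝ} (hr : 0 < r) (j : Fin n) :
    |x j| ≤ (∑ j', |x j'| ^ r) ^ (1/r) := by
  have h1 : |x j| ^ r ≤ ∑ j', |x j'| ^ r :=
    Finset.single_le_sum (fun j' _ => Real.rpow_nonneg (abs_nonneg _) _) (mem_univ j)
  have h2 : |x j| = (|x j| ^ r) ^ (1/r) := by
    rw [← Real.rpow_mul (abs_nonneg _), mul_one_div, div_self hr.ne', Real.rpow_one]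
  rw [h2]
  exact Real.rpow_le_rpow (Real.rpow_nonneg (abs_nonneg _) _) h1 (by positivity)

lemma np_anti (x : Fin n → ℝ) {r s : ℝ} (hr : 0 < r) (hrs : r ≤ s) :
    (∑ j, |x j| ^ s) ^ (1/s) ≤ (∑ j, |x j| ^ r) ^ (1/r) := by
  have hs : 0 < s := lt_of_lt_of_le hr hrs
  set c := (∑ j, |x j| ^ r) ^ (1/r) with hc
  have hc0 : 0 ≤ c := np_nonneg x r
  have hcr : c ^ r = ∑ j, |x j| ^ r := np_rpow x hr.ne'
  have hsum : ∑ j, |x j| ^ s ≤ c ^ s := by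
    have key : ∀ j : Fin n, |x j| ^ s ≤ |x j| ^ r * c ^ (s - r) := by
      intro j
      have hxc : |x j| ≤ c := term_le_np x hr j
      have e1 : |x j| ^ s = |x j| ^ r * |x j| ^ (s - r) := by
        rw [← Real.rpow_add' (abs_nonneg _)
          (show r + (s - r) ≠ 0 by intro h0; exact hs.ne' (by linarith))]
        congr 1
        ring
      rw [e1]
      exact mul_le_mul_of_nonneg_left
        (Real.rpow_le_rpow (abs_nonneg _) hxc (by linarith))
        (Real.rpow_nonneg (abs_nonneg _) _)
    calc ∑ j, |x j| ^ s ≤ ∑ j, |x j| ^ r * c ^ (s - r) := Finset.sum_le_sum fun j _ => key j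
      _ = c ^ r * c ^ (s - r) := by rw [← Finset.sum_mul, hcr]
      _ = c ^ s := by
          rw [← Real.rpow_add' hc0
            (show r + (s - r) ≠ 0 by intro h0; exact hs.ne' (by linarith))]
          congr 1
          ring
  calc (∑ j, |x j| ^ s) ^ (1/s) ≤ (c ^ s) ^ (1/s) :=
        Real.rpow_le_rpow (sum_rpow_nonneg x s) hsum (by positivity)
    _ = c := by rw [← Real.rpow_mul hc0, mul_one_div, div_self hs.ne', Real.rpow_one]

lemma sup_le_np (x : Fin n → ℝ) {r : ℝ} (hr : 0 < r) :
    (⨆ j, |x j|) ≤ (∑ j, |x j| ^ r) ^ (1/r) :=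
  Real.iSup_le (fun j => term_le_np x hr j) (np_nonneg x r)

lemma np_le_card_mul (x : Fin n → ℝ) {r s : ℝ} (hr : 0 < r) (hrs : r < s) :
    (∑ j, |x j| ^ r) ^ (1/r) ≤ (n:ℝ) ^ (1/r - 1/s) * (∑ j, |x j| ^ s) ^ (1/s) := by
  have hs : 0 < s := lt_trans hr hrs
  have hcon : (s/r).HolderConjugate ((s/r)/(s/r - 1)) :=
    Real.HolderConjugate.conjExponent ((one_lt_div hr).mpr hrs)
  have hold := Real.inner_le_Lp_mul_Lq_of_nonneg univ hcon
    (f := fun j => |x j| ^ r) (g := fun _ => (1:ℝ))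
    (fun i _ => Real.rpow_nonneg (abs_nonneg _) _) (fun i _ => zero_le_one)
  simp only [mul_one, Real.one_rpow, Finset.sum_const, Finset.card_univ, Fintype.card_fin,
    nsmul_eq_mul] at hold
  have e1 : ∀ j : Fin n, (|x j| ^ r) ^ (s/r) = |x j| ^ s := by
    intro j
    rw [← Real.rpow_mul (abs_nonneg _), mul_div_cancel₀ _ hr.ne']
  rw [Finset.sum_congr rfl (fun j _ => e1 j)] at hold
  have e2 : 1/(s/r) = r/s := one_div_div s r
  have e3 : 1/((s/r)/(s/r - 1)) = 1 - r/s := by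
    rw [one_div_div]
    field_simp
  rw [e2, e3] at hold
  have hA : 0 ≤ ∑ j, |x j| ^ s := sum_rpow_nonneg x s
  calc (∑ j, |x j| ^ r) ^ (1/r)
      ≤ ((∑ j, |x j| ^ s) ^ (r/s) * (n:ℝ) ^ (1 - r/s)) ^ (1/r) :=
        Real.rpow_le_rpow (sum_rpow_nonneg x r) hold (by positivity)
    _ = (n:ℝ) ^ (1/r - 1/s) * (∑ j, |x j| ^ s) ^ (1/s) := by
        rw [Real.mul_rpow (by positivity) (by positivity),
          ← Real.rpow_mul hA, ← Real.rpow_mul (by positivity : (0:ℝ) ≤ (n:ℝ)),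
          show r/s * (1/r) = 1/s by rw [div_mul_div_comm, mul_one, mul_comm s r,
            ← div_div, div_self hr.ne'],
          show (1 - r/s) * (1/r) = 1/r - 1/s by
            rw [sub_mul, one_mul, div_mul_div_comm, mul_one, mul_comm s r, ← div_div,
              div_self hr.ne']]
        ring

lemma np_le_card_mul_top (x : Fin n → ℝ) {r : ℝ} (hr : 0 < r) :
    (∑ j, |x j| ^ r) ^ (1/r) ≤ (n:ℝ) ^ (1/r) * (⨆ j, |x j|) := by
  have hsup : 0 ≤ ⨆ j, |x j| := Real.iSup_nonneg fun _ => abs_nonneg _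
  have hsum : ∑ j, |x j| ^ r ≤ (n:ℝ) * (⨆ j, |x j|) ^ r := by
    calc ∑ j, |x j| ^ r ≤ ∑ _j : Fin n, (⨆ j, |x j|) ^ r :=
          Finset.sum_le_sum fun j _ =>
            Real.rpow_le_rpow (abs_nonneg _) (le_ciSup (f := fun j => |x j|) (Finite.bddAbove_range _) j) hr.le
      _ = (n:ℝ) * (⨆ j, |x j|) ^ r := by
          simp [Finset.sum_const, nsmul_eq_mul]
  calc (∑ j, |x j| ^ r) ^ (1/r) ≤ ((n:ℝ) * (⨆ j, |x j|) ^ r) ^ (1/r) :=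
        Real.rpow_le_rpow (sum_rpow_nonneg x r) hsum (by positivity)
    _ = (n:ℝ) ^ (1/r) * (⨆ j, |x j|) := by
        rw [Real.mul_rpow (by positivity) (by positivity),
          ← Real.rpow_mul hsup, mul_one_div, div_self hr.ne', Real.rpow_one]

lemma lemB {K : ℕ} (ψ : Fin n → Fin n → ℝ)
    (hK : ∀ j, (univ.filter fun i => ψ i j ≠ 0).card ≤ K)
    {r : ℝ} (hr : 1 ≤ r) (A : Finset (Fin n)) (b : Fin n → ℝ) (hb : ∀ i, 0 ≤ b i) :
    ∑ j, (∑ i ∈ A, b i * |ψ i j|) ^ r ≤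
      (K:ℝ) ^ (r-1) * ∑ i ∈ A, b i ^ r * (∑ j, |ψ i j| ^ r) := by
  have step : ∀ j : Fin n, (∑ i ∈ A, b i * |ψ i j|) ^ r ≤
      (K:ℝ) ^ (r-1) * ∑ i ∈ A, (b i) ^ r * |ψ i j| ^ r := by
    intro j
    set s := A.filter (fun i => ψ i j ≠ 0) with hs
    have hsum : ∑ i ∈ A, b i * |ψ i j| = ∑ i ∈ s, b i * |ψ i j| :=
      (Finset.sum_filter_of_ne (fun i _ hne =>
        show ψ i j ≠ 0 from fun h0 => hne (by rw [h0, abs_zero, mul_zero]))).symm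
    have hcard : (s.card : ℝ) ≤ (K:ℝ) := by
      have h1 : s ⊆ univ.filter (fun i => ψ i j ≠ 0) :=
        Finset.filter_subset_filter _ (Finset.subset_univ A)
      exact_mod_cast le_trans (Finset.card_le_card h1) (hK j)
    have h1 : (∑ i ∈ s, b i * |ψ i j|) ^ r ≤
        (s.card : ℝ) ^ (r-1) * ∑ i ∈ s, (b i * |ψ i j|) ^ r := by
      have h0 := Real.rpow_sum_le_const_mul_sum_rpow s (fun i => b i * |ψ i j|) hr
      have habs : ∀ i : Fin n, abs (b i * |ψ i j|) = b i * |ψ i j| := fun i =>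
        abs_of_nonneg (mul_nonneg (hb i) (abs_nonneg _))
      simpa only [habs] using h0
    calc (∑ i ∈ A, b i * |ψ i j|) ^ r = (∑ i ∈ s, b i * |ψ i j|) ^ r := by rw [hsum]
      _ ≤ (s.card : ℝ) ^ (r-1) * ∑ i ∈ s, (b i * |ψ i j|) ^ r := h1
      _ ≤ (K:ℝ) ^ (r-1) * ∑ i ∈ s, (b i * |ψ i j|) ^ r := by
          apply mul_le_mul_of_nonneg_right
            (Real.rpow_le_rpow (by positivity) hcard (by linarith))
          exact Finset.sum_nonneg fun i _ => Real.rpow_nonneg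
            (mul_nonneg (hb i) (abs_nonneg _)) _
      _ ≤ (K:ℝ) ^ (r-1) * ∑ i ∈ A, (b i * |ψ i j|) ^ r := by
          apply mul_le_mul_of_nonneg_left _ (by positivity)
          apply Finset.sum_le_sum_of_subset_of_nonneg (Finset.filter_subset _ _)
          intro i _ _
          exact Real.rpow_nonneg (mul_nonneg (hb i) (abs_nonneg _)) _
      _ = (K:ℝ) ^ (r-1) * ∑ i ∈ A, (b i) ^ r * |ψ i j| ^ r := by
          congr 1
          exact Finset.sum_congr rfl fun i _ => Real.mul_rpow (hb i) (abs_nonneg _)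
  calc ∑ j, (∑ i ∈ A, b i * |ψ i j|) ^ r
      ≤ ∑ j : Fin n, (K:ℝ) ^ (r-1) * ∑ i ∈ A, (b i) ^ r * |ψ i j| ^ r :=
        Finset.sum_le_sum fun j _ => step j
    _ = (K:ℝ) ^ (r-1) * ∑ j : Fin n, ∑ i ∈ A, b i ^ r * |ψ i j| ^ r := by
        rw [← Finset.mul_sum]
    _ = (K:ℝ) ^ (r-1) * ∑ i ∈ A, ∑ j : Fin n, b i ^ r * |ψ i j| ^ r := by
        rw [Finset.sum_comm]
    _ = (K:ℝ) ^ (r-1) * ∑ i ∈ A, b i ^ r * (∑ j, |ψ i j| ^ r) := by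
        congr 1
        exact Finset.sum_congr rfl fun i _ => (Finset.mul_sum _ _ _).symm

lemma abs_dotp_le (g : Fin n → ℝ) (x : Fin n → ℝ) :
    |dotp g x| ≤ ∑ j, |g j| * |x j| := by
  refine le_trans (Finset.abs_sum_le_sum_abs _ _) ?_
  exact le_of_eq (Finset.sum_congr rfl fun j _ => abs_mul _ _)

lemma lemD1 {K : ℕ} (ψ : Fin n → Fin n → ℝ)
    (hK : ∀ j, (univ.filter fun i => ψ i j ≠ 0).card ≤ K)
    (hψ : ∀ i, 0 < ⨆ j, |ψ i j|) (g : Fin n → ℝ) :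
    ∑ i, |dotp g (ψ i)| / (⨆ j, |ψ i j|) ≤ (K:ℝ) * ∑ j, |g j| := by
  have inner : ∀ j, ∑ i, |ψ i j| / (⨆ j', |ψ i j'|) ≤ (K:ℝ) := by
    intro j
    calc ∑ i, |ψ i j| / (⨆ j', |ψ i j'|)
        ≤ ∑ i, (if ψ i j ≠ 0 then (1:ℝ) else 0) := by
          apply Finset.sum_le_sum
          intro i _
          by_cases h : ψ i j = 0
          · simp [h]
          · rw [if_pos h]
            exact div_le_one_of_le₀
              (le_ciSup (f := fun j' => |ψ i j'|) (Finite.bddAbove_range _) j) (hψ i).le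
      _ = ((univ.filter fun i => ψ i j ≠ 0).card : ℝ) := by
          rw [Finset.sum_ite, Finset.sum_const, Finset.sum_const]
          simp
      _ ≤ (K:ℝ) := by exact_mod_cast hK j
  calc ∑ i, |dotp g (ψ i)| / (⨆ j, |ψ i j|)
      ≤ ∑ i, (∑ j, |g j| * |ψ i j|) / (⨆ j', |ψ i j'|) := by
        apply Finset.sum_le_sum
        intro i _
        have h := abs_dotp_le g (ψ i)
        gcongr
        exact Real.iSup_nonneg fun _ => abs_nonneg _
    _ = ∑ j, |g j| * ∑ i, |ψ i j| / (⨆ j', |ψ i j'|) := by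
        rw [Finset.sum_congr rfl fun i (_ : i ∈ univ) => Finset.sum_div univ _ _,
          Finset.sum_comm]
        exact Finset.sum_congr rfl fun j _ => by
          rw [Finset.mul_sum]
          exact Finset.sum_congr rfl fun i _ => (mul_div_assoc _ _ _)
    _ ≤ ∑ j, |g j| * (K:ℝ) := Finset.sum_le_sum fun j _ =>
        mul_le_mul_of_nonneg_left (inner j) (abs_nonneg _)
    _ = (K:ℝ) * ∑ j, |g j| := by rw [← Finset.sum_mul, mul_comm]

lemma lemDp {K : ℕ} (ψ : Fin n → Fin n → ℝ)
    (hK : ∀ j, (univ.filter fun i => ψ i j ≠ 0).card ≤ K)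
    {p q : ℝ} (hpq : p.HolderConjugate q)
    (w : Fin n → ℝ) (hw : ∀ i, w i = (∑ j, |ψ i j| ^ q) ^ (1/q)) (hw0 : ∀ i, 0 < w i)
    (g : Fin n → ℝ) :
    ∑ i, (|dotp g (ψ i)| / w i) ^ p ≤ (K:ℝ) * ∑ j, |g j| ^ p := by
  set D : Fin n → ℝ := fun i => |dotp g (ψ i)| / w i with hD
  have hD0 : ∀ i, 0 ≤ D i := fun i => div_nonneg (abs_nonneg _) (hw0 i).le
  set b : Fin n → ℝ := fun i => D i ^ (p - 1) / w i with hb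
  have hb0 : ∀ i, 0 ≤ b i := fun i => div_nonneg (Real.rpow_nonneg (hD0 i) _) (hw0 i).le
  set S := ∑ i, D i ^ p with hS
  have hS0 : 0 ≤ S := Finset.sum_nonneg fun i _ => Real.rpow_nonneg (hD0 i) _
  set v : Fin n → ℝ := fun j => ∑ i, b i * |ψ i j| with hv
  have hv0 : ∀ j, 0 ≤ v j :=
    fun j => Finset.sum_nonneg fun i _ => mul_nonneg (hb0 i) (abs_nonneg _)
  have hp1 : 1 < p := hpq.lt
  have hq1 : 1 < q := hpq.symm.lt
  have hqne : q ≠ 0 := by linarith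
  -- step 1
  have step1 : S ≤ ∑ j, |g j| * v j := by
    have e1 : ∀ i, D i ^ p = b i * |dotp g (ψ i)| := by
      intro i
      have habs : |dotp g (ψ i)| = D i * w i := by
        simp only [hD]
        exact (div_mul_cancel₀ _ (hw0 i).ne').symm
      by_cases hDi : D i = 0
      · rw [hDi, Real.zero_rpow hpq.ne_zero, habs, hDi, zero_mul, mul_zero]
      · have hDpos : 0 < D i := lt_of_le_of_ne (hD0 i) (Ne.symm hDi)
        have h2 : D i ^ p = D i ^ (p - 1) * D i := by
          calc D i ^ p = D i ^ (p - 1 + 1) := by congr 1; ring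
            _ = D i ^ (p-1) * D i ^ (1:ℝ) := Real.rpow_add hDpos _ _
            _ = D i ^ (p-1) * D i := by rw [Real.rpow_one]
        rw [h2, habs]
        simp only [hb]
        rw [div_mul_eq_mul_div, mul_div_assoc, mul_div_cancel_right₀ _ (hw0 i).ne']
    calc S = ∑ i, b i * |dotp g (ψ i)| := Finset.sum_congr rfl fun i _ => e1 i
      _ ≤ ∑ i, b i * ∑ j, |g j| * |ψ i j| := Finset.sum_le_sum fun i _ =>
          mul_le_mul_of_nonneg_left (abs_dotp_le g (ψ i)) (hb0 i)
      _ = ∑ j, |g j| * v j := by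
          rw [Finset.sum_congr rfl fun i (_ : i ∈ univ) => Finset.mul_sum univ _ _,
            Finset.sum_comm]
          refine Finset.sum_congr rfl fun j _ => ?_
          simp only [hv]
          rw [Finset.mul_sum]
          exact Finset.sum_congr rfl fun i _ => by ring
  -- step 2 (Hölder)
  have step2 : ∑ j, |g j| * v j ≤
      (∑ j, |g j| ^ p) ^ (1/p) * (∑ j, v j ^ q) ^ (1/q) :=
    Real.inner_le_Lp_mul_Lq_of_nonneg univ hpq (fun j _ => abs_nonneg _) (fun j _ => hv0 j)
  -- step 3
  have step3 : ∑ j, v j ^ q ≤ (K:ℝ) ^ (q - 1) * S := by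
    have hB := lemB ψ hK (le_of_lt hq1) univ b hb0
    have e2 : ∀ i, b i ^ q * (∑ j, |ψ i j| ^ q) = D i ^ p := by
      intro i
      have hwq : (∑ j, |ψ i j| ^ q) = w i ^ q := by
        rw [hw i, np_rpow _ hqne]
      rw [hwq]
      simp only [hb]
      rw [Real.div_rpow (Real.rpow_nonneg (hD0 i) _) (hw0 i).le]
      rw [div_mul_cancel₀ _ (Real.rpow_pos_of_pos (hw0 i) q).ne',
        ← Real.rpow_mul (hD0 i), hpq.sub_one_mul_conj]
    calc ∑ j, v j ^ q ≤ (K:ℝ) ^ (q-1) * ∑ i, b i ^ q * (∑ j, |ψ i j| ^ q) := hB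
      _ = (K:ℝ) ^ (q-1) * S := by
          rw [Finset.sum_congr rfl fun i _ => e2 i]
  -- step 4: combine
  have hK0 : (0:ℝ) ≤ (K:ℝ) := Nat.cast_nonneg K
  have hG0 : 0 ≤ (∑ j, |g j| ^ p) ^ (1/p) := Real.rpow_nonneg (sum_rpow_nonneg g p) _
  have hexp : (q - 1) * (1/q) = 1/p := by
    rw [sub_mul, one_mul, mul_one_div, div_self hqne, one_div, one_div]
    exact hpq.symm.one_sub_inv
  have key : S ≤ ((∑ j, |g j| ^ p) ^ (1/p) * (K:ℝ) ^ (1/p)) * S ^ (1/q) := by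
    have hvq0 : 0 ≤ ∑ j, v j ^ q :=
      Finset.sum_nonneg fun j _ => Real.rpow_nonneg (hv0 j) _
    have h4 : (∑ j, v j ^ q) ^ (1/q) ≤ ((K:ℝ) ^ (q-1) * S) ^ (1/q) :=
      Real.rpow_le_rpow hvq0 step3 (by positivity)
    have h5 : ((K:ℝ) ^ (q-1) * S) ^ (1/q) = (K:ℝ) ^ (1/p) * S ^ (1/q) := by
      rw [Real.mul_rpow (by positivity) hS0, ← Real.rpow_mul hK0, hexp]
    calc S ≤ ∑ j, |g j| * v j := step1
      _ ≤ (∑ j, |g j| ^ p) ^ (1/p) * (∑ j, v j ^ q) ^ (1/q) := step2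
      _ ≤ (∑ j, |g j| ^ p) ^ (1/p) * (((K:ℝ) ^ (q-1) * S) ^ (1/q)) :=
          mul_le_mul_of_nonneg_left h4 hG0
      _ = ((∑ j, |g j| ^ p) ^ (1/p) * (K:ℝ) ^ (1/p)) * S ^ (1/q) := by
          rw [h5]; ring
  have final : S ≤ (K:ℝ) * ∑ j, |g j| ^ p := by
    rcases eq_or_lt_of_le hS0 with hSz | hSpos
    · rw [← hSz]
      positivity
    · have hq0 : 0 < S ^ (1/q) := Real.rpow_pos_of_pos hSpos _
      have hsplit : S ^ (1/p) * S ^ (1/q) = S := by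
        rw [← Real.rpow_add hSpos]
        have : 1/p + 1/q = 1 := by
          rw [one_div, one_div]; exact hpq.inv_add_inv_eq_one
        rw [this, Real.rpow_one]
      have h6 : S ^ (1/p) ≤ (∑ j, |g j| ^ p) ^ (1/p) * (K:ℝ) ^ (1/p) :=
        le_of_mul_le_mul_right (by rw [hsplit]; exact key) hq0
      have h7 : S ≤ ((∑ j, |g j| ^ p) ^ (1/p) * (K:ℝ) ^ (1/p)) ^ p := by
        have e : (S ^ (1/p)) ^ p = S := by
          rw [← Real.rpow_mul hS0, one_div, inv_mul_cancel₀ hpq.ne_zero, Real.rpow_one]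
        rw [← e]
        exact Real.rpow_le_rpow (Real.rpow_nonneg hS0 _) h6 hpq.nonneg
      calc S ≤ _ := h7
        _ = (K:ℝ) * ∑ j, |g j| ^ p := by
            rw [Real.mul_rpow hG0 (by positivity), np_rpow g hpq.ne_zero,
              ← Real.rpow_mul hK0, one_div, inv_mul_cancel₀ hpq.ne_zero,
              Real.rpow_one, mul_comm]
  calc ∑ i, (|dotp g (ψ i)| / w i) ^ p = S := by rw [hS]
    _ ≤ _ := final

lemma lpNorm_ne_top' {p : ℝ≥0∞} (hp : p ≠ ∞) (x : Fin n → ℝ) :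
    lpNorm p x = (∑ j, |x j| ^ p.toReal) ^ (1/p.toReal) := if_neg hp

lemma lpNorm_top' (x : Fin n → ℝ) : lpNorm ∞ x = ⨆ j, |x j| := if_pos rfl

lemma lpNorm_nonneg' (p : ℝ≥0∞) (x : Fin n → ℝ) : 0 ≤ lpNorm p x := by
  by_cases hp : p = ∞
  · rw [hp, lpNorm_top']
    exact Real.iSup_nonneg fun _ => abs_nonneg _
  · rw [lpNorm_ne_top' hp]
    exact np_nonneg x _

lemma toReal_facts {p : ℝ≥0∞} (hp1 : 1 ≤ p) (hpt : p ≠ ∞) :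
    0 < p.toReal ∧ 1 ≤ p.toReal := by
  have h2 : 1 ≤ p.toReal := by simpa using ENNReal.toReal_mono hpt hp1
  exact ⟨lt_of_lt_of_le zero_lt_one h2, h2⟩

lemma lpNorm_pos {p : ℝ≥0∞} (hp1 : 1 ≤ p) {x : Fin n → ℝ} {j : Fin n} (hx : x j ≠ 0) :
    0 < lpNorm p x := by
  have hj : 0 < |x j| := abs_pos.mpr hx
  by_cases hpt : p = ∞
  · rw [hpt, lpNorm_top']
    exact lt_of_lt_of_le hj (le_ciSup (f := fun j => |x j|) (Finite.bddAbove_range _) j)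
  · rw [lpNorm_ne_top' hpt]
    exact lt_of_lt_of_le hj (term_le_np x (toReal_facts hp1 hpt).1 j)

lemma lpNorm_anti {r s : ℝ≥0∞} (hr1 : 1 ≤ r) (hrs : r ≤ s) (x : Fin n → ℝ) :
    lpNorm s x ≤ lpNorm r x := by
  by_cases hst : s = ∞
  · by_cases hrt : r = ∞
    · rw [hst, hrt]
    · rw [hst, lpNorm_top', lpNorm_ne_top' hrt]
      exact sup_le_np x (toReal_facts hr1 hrt).1
  · have hrt : r ≠ ∞ := fun h => hst (top_le_iff.mp (h ▸ hrs))
    rw [lpNorm_ne_top' hst, lpNorm_ne_top' hrt]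
    exact np_anti x (toReal_facts hr1 hrt).1
      ((ENNReal.toReal_le_toReal hrt hst).mpr hrs)

lemma one_le_conj {P Q : ℝ≥0∞} (h : 1 / P + 1 / Q = 1) : 1 ≤ Q := by
  have h1 : 1 / Q ≤ 1 / P + 1 / Q := le_add_of_nonneg_left zero_le
  rw [h] at h1
  rw [one_div] at h1
  exact ENNReal.inv_le_one.mp h1

lemma conj_cases {P Q : ℝ≥0∞} (hP1 : 1 ≤ P) (hPne : P ≠ ∞) (hconj : 1 / P + 1 / Q = 1) :
    (P = 1 ∧ Q = ∞) ∨ (Q ≠ ∞ ∧ P.toReal.HolderConjugate Q.toReal) := by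
  by_cases hQtop : Q = ∞
  · left
    refine ⟨?_, hQtop⟩
    rw [hQtop] at hconj
    simp only [ENNReal.div_top, add_zero] at hconj
    rwa [one_div, ENNReal.inv_eq_one] at hconj
  · right
    refine ⟨hQtop, ?_⟩
    have hQ1 : 1 ≤ Q := one_le_conj hconj
    have hP0 : P ≠ 0 := fun h => by rw [h] at hP1; simp at hP1
    have hQ0 : Q ≠ 0 := fun h => by rw [h] at hQ1; simp at hQ1
    have hfin1 : 1 / P ≠ ∞ := by
      rw [one_div]; exact ENNReal.inv_ne_top.mpr hP0
    have hfin2 : 1 / Q ≠ ∞ := by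
      rw [one_div]; exact ENNReal.inv_ne_top.mpr hQ0
    have hreal : 1 / P.toReal + 1 / Q.toReal = 1 := by
      have h := congrArg ENNReal.toReal hconj
      rwa [ENNReal.toReal_add hfin1 hfin2, ENNReal.toReal_div, ENNReal.toReal_div,
        ENNReal.toReal_one] at h
    have hP1' : 1 < P := by
      rcases lt_or_eq_of_le hP1 with h | h
      · exact h
      · exfalso
        rw [← h] at hconj
        have h2 : (1:ℝ≥0∞) + 1 / Q = 1 + 0 := by simpa using hconj
        have h3 := (ENNReal.add_right_inj ENNReal.one_ne_top).mp h2
        rw [one_div] at h3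
        exact hQtop (ENNReal.inv_eq_zero.mp h3)
    refine Real.holderConjugate_iff.mpr ⟨?_, ?_⟩
    · have := (ENNReal.toReal_lt_toReal ENNReal.one_ne_top hPne).mpr hP1'
      simpa using this
    · rwa [one_div, one_div] at hreal

end S9

set_option maxHeartbeats 1000000 in
/-- universal representation: let `n = 2^L` with `L ≥ 2`, and let `{ψ_i}`
be an orthonormal basis of `ℝ^n` with overlap at most `K` such that for every conjugate
pair `p, q ∈ [1,∞]` one has `‖ψ_k‖_p · ‖ψ_k‖_q ≤ M` for all `k`.  Let `f ∈ ℝ^n`,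
`B ≤ n`.  For each `t = 0, …, L(L−1)` set `p_t = 1 + t/L` with Hölder conjugate `q t`,
and let `S t` be a set of `B` indices of the `B` largest values of
`|⟨f, ψ_k⟩| / ‖ψ_k‖_{q t}`.  Let `Sall = ∪_t S t` and
`f̂_u = Σ_{i ∈ Sall} ⟨f, ψ_i⟩ ψ_i`.  Then for every `p ∈ [1, ∞)`:
`‖f − f̂_u‖_p ≤ 2·M·K·E_p`, where `E_p` is the minimum over `B`-sparse `z` of
`‖f − Σ_i z_i ψ_i‖_p`. -/
theorem stmt9 {L n B K : ℕ} (hL : 2 ≤ L) (hn : n = 2 ^ L)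
    (ψ : Fin n → Fin n → ℝ)
    (horth : ∀ i k, dotp (ψ i) (ψ k) = if i = k then (1 : ℝ) else 0)
    (hK : ∀ j : Fin n, ({i | ψ i j ≠ 0} : Set (Fin n)).ncard ≤ K)
    (M : ℝ)
    (hM : ∀ p q : ℝ≥0∞, 1 ≤ p → 1 / p + 1 / q = 1 →
      ∀ k, lpNorm p (ψ k) * lpNorm q (ψ k) ≤ M)
    (f : Fin n → ℝ) (hB : B ≤ n)
    (q : ℕ → ℝ≥0∞)
    (hq : ∀ t ≤ L * (L - 1), 1 / (1 + (t : ℝ≥0∞) / (L : ℝ≥0∞)) + 1 / q t = 1)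
    (S : ℕ → Finset (Fin n))
    (hScard : ∀ t ≤ L * (L - 1), (S t).card = B)
    (hSord : ∀ t ≤ L * (L - 1), ∀ i ∈ S t, ∀ k ∉ S t,
      |dotp f (ψ k)| / lpNorm (q t) (ψ k) ≤ |dotp f (ψ i)| / lpNorm (q t) (ψ i))
    (Sall : Finset (Fin n)) (hSall : Sall = (Finset.range (L * (L - 1) + 1)).biUnion S)
    (fu : Fin n → ℝ) (hfu : ∀ j, fu j = ∑ i ∈ Sall, dotp f (ψ i) * ψ i j) :
    ∀ p : ℝ≥0∞, 1 ≤ p → p ≠ ∞ →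
      lpNorm p (fun j => f j - fu j) ≤
        2 * M * (K : ℝ) *
          sInf {e : ℝ | ∃ z : Fin n → ℝ, Sparse B z ∧
            e = lpNorm p (fun j => f j - ∑ i, z i * ψ i j)} := by
  intro p hp1 hpt
  classical
  obtain ⟨hpr0, hpr1⟩ := S9.toReal_facts hp1 hpt
  set pr := p.toReal with hprdef
  have hn0 : 0 < n := by rw [hn]; positivity
  have hL0 : 0 < L := by omega
  have hL0' : (0:ℝ) < L := by exact_mod_cast hL0
  have horth' : ∀ i k, ∑ j, ψ i j * ψ k j = if i = k then (1:ℝ) else 0 := by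
    intro i k
    have h := horth i k
    simpa [dotp] using h
  have hcol : ∀ j j' : Fin n, ∑ i, ψ i j * ψ i j' = if j = j' then (1:ℝ) else 0 := by
    have hA : (Matrix.of ψ) * (Matrix.of ψ).transpose = 1 := by
      ext i k
      simp only [Matrix.mul_apply, Matrix.transpose_apply, Matrix.of_apply, Matrix.one_apply]
      exact horth' i k
    have hA' := mul_eq_one_comm.mp hA
    intro j j'
    have h2 := congrFun (congrFun hA' j) j'
    simpa only [Matrix.mul_apply, Matrix.transpose_apply, Matrix.of_apply,
      Matrix.one_apply] using h2
  have hexp : ∀ j, ∑ i, dotp f (ψ i) * ψ i j = f j := by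
    intro j
    have e1 : ∀ i : Fin n, dotp f (ψ i) * ψ i j = ∑ j', f j' * (ψ i j' * ψ i j) := by
      intro i
      rw [dotp, Finset.sum_mul]
      exact Finset.sum_congr rfl fun j' _ => by ring
    rw [Finset.sum_congr rfl fun i _ => e1 i, Finset.sum_comm]
    have e2 : ∀ j' : Fin n, ∑ i, f j' * (ψ i j' * ψ i j)
        = f j' * (if j' = j then 1 else 0) := by
      intro j'
      rw [← Finset.mul_sum, hcol j' j]
    rw [Finset.sum_congr rfl fun j' _ => e2 j']
    simp
  have hψnz : ∀ i, ∃ j, ψ i j ≠ 0 := by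
    intro i
    by_contra hcon
    push_neg at hcon
    have h := horth' i i
    simp [hcon] at h
  have hKf : ∀ j, (Finset.univ.filter fun i => ψ i j ≠ 0).card ≤ K := by
    intro j
    have h1 : ({i | ψ i j ≠ 0} : Set (Fin n)).ncard
        = (Finset.univ.filter fun i => ψ i j ≠ 0).card := by
      rw [Set.ncard_eq_toFinset_card']
      congr 1
      ext i
      simp
    have := hK j
    omega
  have hK1 : 1 ≤ K := by
    obtain ⟨j0⟩ : Nonempty (Fin n) := ⟨⟨0, hn0⟩⟩
    obtain ⟨i0, hi0⟩ : ∃ i, ψ i j0 ≠ 0 := by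
      by_contra hcon
      push_neg at hcon
      have h := hcol j0 j0
      simp [hcon] at h
    have hmem : i0 ∈ Finset.univ.filter (fun i => ψ i j0 ≠ 0) := by simp [hi0]
    have h1 := Finset.card_pos.mpr ⟨i0, hmem⟩
    have h2 := hKf j0
    omega
  have hK1' : (1:ℝ) ≤ (K:ℝ) := by exact_mod_cast hK1
  have hK0' : (0:ℝ) < (K:ℝ) := by linarith
  have hM1 : 1 ≤ M := by
    obtain ⟨k0⟩ : Nonempty (Fin n) := ⟨⟨0, hn0⟩⟩
    have h22 : (1:ℝ≥0∞)/2 + 1/2 = 1 := ENNReal.add_halves 1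
    have hMk := hM 2 2 (by norm_num) h22 k0
    have hl2 : lpNorm 2 (ψ k0) = 1 := by
      rw [S9.lpNorm_ne_top' (by norm_num) (ψ k0)]
      have h3 : ∑ j, |ψ k0 j| ^ ((2:ℝ≥0∞)).toReal = 1 := by
        have h2 := horth' k0 k0
        rw [if_pos rfl] at h2
        rw [show ((2:ℝ≥0∞)).toReal = (2:ℝ) by simp]
        rw [← h2]
        exact Finset.sum_congr rfl fun j _ => by
          rw [Real.rpow_two, sq_abs, pow_two]
      rw [h3, Real.one_rpow]
    rw [hl2, one_mul] at hMk
    exact hMk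
  have hM0 : (0:ℝ) < M := lt_of_lt_of_le zero_lt_one hM1
  -- main competitor bound
  have hmain : ∀ z : Fin n → ℝ, Sparse B z →
      lpNorm p (fun j => f j - fu j) ≤
        2 * M * (K:ℝ) * lpNorm p (fun j => f j - ∑ i, z i * ψ i j) := by
    intro z hz
    set g : Fin n → ℝ := fun j => f j - ∑ i, z i * ψ i j with hgdef
    have hgc : ∀ k, dotp g (ψ k) = dotp f (ψ k) - z k := by
      intro k
      simp only [dotp, hgdef]
      have e1 : ∀ j : Fin n, (f j - ∑ i, z i * ψ i j) * ψ k j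
          = f j * ψ k j - ∑ i, z i * (ψ i j * ψ k j) := by
        intro j
        rw [sub_mul, Finset.sum_mul]
        congr 1
        exact Finset.sum_congr rfl fun i _ => by ring
      rw [Finset.sum_congr rfl fun j _ => e1 j, Finset.sum_sub_distrib]
      congr 1
      rw [Finset.sum_comm]
      have e2 : ∀ i : Fin n, ∑ j, z i * (ψ i j * ψ k j) = z i * (if i = k then 1 else 0) := by
        intro i
        rw [← Finset.mul_sum, horth' i k]
      rw [Finset.sum_congr rfl fun i _ => e2 i]
      simp
    -- choice of t₀
    set t₀ : ℕ := min (Nat.floor ((pr - 1) * (L:ℝ))) (L * (L - 1)) with ht₀def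
    have ht₀le : t₀ ≤ L * (L-1) := min_le_right _ _
    have hqt : 1 / (1 + (t₀:ℝ≥0∞)/(L:ℝ≥0∞)) + 1 / q t₀ = 1 := hq t₀ ht₀le
    set Pt : ℝ≥0∞ := 1 + (t₀:ℝ≥0∞)/(L:ℝ≥0∞) with hPtdef
    set Q : ℝ≥0∞ := q t₀ with hQdef
    have hLne : ((L:ℝ≥0∞)) ≠ 0 := by
      simpa using hL0.ne'
    have hdivne : ((t₀:ℝ≥0∞)/(L:ℝ≥0∞)) ≠ ∞ := (ENNReal.div_lt_top (by simp) hLne).ne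
    have hPt1 : 1 ≤ Pt := by rw [hPtdef]; exact self_le_add_right 1 _
    have hPtne : Pt ≠ ∞ := by
      rw [hPtdef]
      exact ENNReal.add_ne_top.mpr ⟨ENNReal.one_ne_top, hdivne⟩
    have hPtr : Pt.toReal = 1 + (t₀:ℝ)/(L:ℝ) := by
      rw [hPtdef, ENNReal.toReal_add ENNReal.one_ne_top hdivne, ENNReal.toReal_one,
        ENNReal.toReal_div]
      norm_num
    have hPtr1 : 1 ≤ Pt.toReal := by
      rw [hPtr]
      have h0 : (0:ℝ) ≤ (t₀:ℝ)/(L:ℝ) := by positivity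
      linarith
    have hPt_le_pr : Pt.toReal ≤ pr := by
      rw [hPtr]
      have h1 : (t₀:ℝ) ≤ (pr - 1) * L := by
        calc (t₀:ℝ) ≤ (Nat.floor ((pr-1)*(L:ℝ)) : ℝ) := by exact_mod_cast min_le_left _ _
          _ ≤ (pr-1)*L := Nat.floor_le (by nlinarith : (0:ℝ) ≤ (pr-1)*(L:ℝ))
      have h2 : (t₀:ℝ)/L ≤ pr - 1 := (div_le_iff₀ hL0').mpr (by linarith)
      linarith
    have hPt_le_p : Pt ≤ p := (ENNReal.toReal_le_toReal hPtne hpt).mp hPt_le_pr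
    have hgap : 1/Pt.toReal - 1/pr ≤ 1/(L:ℝ) := by
      rcases le_or_gt ((pr-1) * (L:ℝ)) ((L*(L-1) : ℕ) : ℝ) with hcase | hcase
      · have hfl : Nat.floor ((pr-1)*(L:ℝ)) ≤ L*(L-1) := by
          have h := Nat.floor_mono hcase
          rwa [Nat.floor_natCast] at h
        have ht₀eq : t₀ = Nat.floor ((pr-1)*(L:ℝ)) := by
          rw [ht₀def]
          exact min_eq_left hfl
        have hlt : (pr - 1) * L < (t₀:ℝ) + 1 := by
          rw [ht₀eq]
          exact_mod_cast Nat.lt_floor_add_one ((pr-1)*(L:ℝ))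
        have h1 : pr < Pt.toReal + 1/L := by
          rw [hPtr]
          have h2 : pr - 1 < ((t₀:ℝ)+1)/L := (lt_div_iff₀ hL0').mpr (by linarith)
          have h3 : ((t₀:ℝ)+1)/L = (t₀:ℝ)/L + 1/L := by ring
          linarith
        have hnum : 0 ≤ pr - Pt.toReal := by linarith
        have hden : 1 ≤ Pt.toReal * pr := by nlinarith
        have heq : 1/Pt.toReal - 1/pr = (pr - Pt.toReal)/(Pt.toReal * pr) := by
          field_simp
        rw [heq]
        calc (pr - Pt.toReal)/(Pt.toReal * pr) ≤ pr - Pt.toReal := div_le_self hnum hden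
          _ ≤ 1/L := by linarith
      · have hfl : L*(L-1) ≤ Nat.floor ((pr-1)*(L:ℝ)) := Nat.le_floor (le_of_lt hcase)
        have ht₀eq : t₀ = L*(L-1) := by
          rw [ht₀def]
          exact min_eq_right hfl
        have hPtL : Pt.toReal = (L:ℝ) := by
          rw [hPtr, ht₀eq]
          have hc : ((L*(L-1) : ℕ):ℝ) = (L:ℝ) * ((L:ℝ) - 1) := by
            push_cast [Nat.cast_sub (by omega : 1 ≤ L)]
            ring
          rw [hc]
          field_simp
          ring
        rw [hPtL]
        have h0 : (0:ℝ) ≤ 1/pr := by positivity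
        linarith
    -- conjugate structure
    have hQ1 : 1 ≤ Q := S9.one_le_conj hqt
    have hQalt := S9.conj_cases hPt1 hPtne hqt
    set p' : ℝ≥0∞ := (1 - 1/p)⁻¹ with hp'def
    have hp'conj : 1/p + 1/p' = 1 := by
      rw [hp'def, one_div ((1 - 1/p)⁻¹), inv_inv]
      exact add_tsub_cancel_of_le (by rw [one_div]; exact ENNReal.inv_le_one.mpr hp1)
    have hp'1 : 1 ≤ p' := S9.one_le_conj hp'conj
    have hPalt := S9.conj_cases hp1 hpt hp'conj
    have hwp' : ∀ i, 0 < lpNorm p' (ψ i) := fun i => by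
      obtain ⟨j, hj⟩ := hψnz i
      exact S9.lpNorm_pos hp'1 hj
    have hwq : ∀ i, 0 < lpNorm Q (ψ i) := fun i => by
      obtain ⟨j, hj⟩ := hψnz i
      exact S9.lpNorm_pos hQ1 hj
    have hMp : ∀ i, lpNorm p (ψ i) * lpNorm p' (ψ i) ≤ M := fun i => hM p p' hp1 hp'conj i
    have hMq : ∀ i, lpNorm p (ψ i) * lpNorm Q (ψ i) ≤ M := by
      intro i
      calc lpNorm p (ψ i) * lpNorm Q (ψ i)
          ≤ lpNorm Pt (ψ i) * lpNorm Q (ψ i) :=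
            mul_le_mul_of_nonneg_right (S9.lpNorm_anti hPt1 hPt_le_p (ψ i))
              (S9.lpNorm_nonneg' _ _)
        _ ≤ M := hM Pt Q hPt1 hqt i
    have hncast : (n:ℝ) = (2:ℝ) ^ (L:ℝ) := by
      rw [hn]
      push_cast
      rw [Real.rpow_natCast]
    have hnrle : ∀ x : ℝ, x ≤ 1/(L:ℝ) → (n:ℝ) ^ x ≤ 2 := by
      intro x hx
      rw [hncast, ← Real.rpow_mul (by norm_num : (0:ℝ) ≤ 2)]
      calc (2:ℝ) ^ ((L:ℝ) * x) ≤ (2:ℝ) ^ (1:ℝ) := by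
            apply Real.rpow_le_rpow_of_exponent_le one_le_two
            calc (L:ℝ) * x ≤ (L:ℝ) * (1/L) := mul_le_mul_of_nonneg_left hx hL0'.le
              _ = 1 := by field_simp
        _ = 2 := Real.rpow_one 2
    have hcmp : ∀ i, lpNorm p' (ψ i) ≤ 2 * lpNorm Q (ψ i) := by
      intro i
      rcases hPalt with ⟨hpeq, hp'top⟩ | ⟨hp'ne, hpcj⟩
      · rcases hQalt with ⟨hPteq, hQtop⟩ | ⟨hQne, hqcj⟩
        · rw [hp'top, hQtop]
          nlinarith [S9.lpNorm_nonneg' (⊤:ℝ≥0∞) (ψ i)]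
        · exfalso
          have hPt1' : Pt = 1 := le_antisymm (hpeq ▸ hPt_le_p) hPt1
          rw [hPt1'] at hqcj
          have := hqcj.lt
          simp at this
      · have h1 : 1/pr + 1/p'.toReal = 1 := by
          have h := hpcj.inv_add_inv_eq_one
          rwa [← one_div, ← one_div] at h
        rcases hQalt with ⟨hPteq, hQtop⟩ | ⟨hQne, hqcj⟩
        · rw [hQtop, S9.lpNorm_top', S9.lpNorm_ne_top' hp'ne]
          have hp'r0 : 0 < p'.toReal := (S9.toReal_facts hp'1 hp'ne).1
          calc (∑ j, |ψ i j| ^ p'.toReal) ^ (1/p'.toReal)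
              ≤ (n:ℝ) ^ (1/p'.toReal) * (⨆ j, |ψ i j|) := S9.np_le_card_mul_top (ψ i) hp'r0
            _ ≤ 2 * (⨆ j, |ψ i j|) := by
                apply mul_le_mul_of_nonneg_right _
                  (Real.iSup_nonneg fun _ => abs_nonneg _)
                apply hnrle
                have h2 : Pt.toReal = 1 := by rw [hPteq]; simp
                rw [h2] at hgap
                linarith
        · rw [S9.lpNorm_ne_top' hp'ne, S9.lpNorm_ne_top' hQne]
          have h2 : 1/Pt.toReal + 1/Q.toReal = 1 := by
            have h := hqcj.inv_add_inv_eq_one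
            rwa [← one_div, ← one_div] at h
          have hp'r0 : 0 < p'.toReal := (S9.toReal_facts hp'1 hp'ne).1
          have hqr0 : 0 < Q.toReal := (S9.toReal_facts hQ1 hQne).1
          have hle : p'.toReal ≤ Q.toReal := by
            have h4 : 1/pr ≤ 1/Pt.toReal :=
              one_div_le_one_div_of_le (by linarith) hPt_le_pr
            have h3 : 1/Q.toReal ≤ 1/p'.toReal := by linarith
            exact le_of_one_div_le_one_div hqr0 h3
          rcases eq_or_lt_of_le hle with heq | hlt
          · rw [heq]
            nlinarith [S9.np_nonneg (ψ i) Q.toReal]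
          · calc (∑ j, |ψ i j| ^ p'.toReal) ^ (1/p'.toReal)
                ≤ (n:ℝ) ^ (1/p'.toReal - 1/Q.toReal)
                    * (∑ j, |ψ i j| ^ Q.toReal) ^ (1/Q.toReal) :=
                  S9.np_le_card_mul (ψ i) hp'r0 hlt
              _ ≤ 2 * (∑ j, |ψ i j| ^ Q.toReal) ^ (1/Q.toReal) := by
                  apply mul_le_mul_of_nonneg_right _ (S9.np_nonneg _ _)
                  apply hnrle
                  linarith
    -- finsets
    set Tz : Finset (Fin n) := Finset.univ.filter (fun i => z i ≠ 0) with hTzdef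
    have hTB : Tz.card ≤ B := by
      have h1 : ({i | z i ≠ 0} : Set (Fin n)).ncard = Tz.card := by
        rw [Set.ncard_eq_toFinset_card']
        congr 1
        ext i
        simp [hTzdef]
      have h2 := hz
      unfold Sparse at h2
      omega
    have hsubSall : S t₀ ⊆ Sall := by
      rw [hSall]
      exact Finset.subset_biUnion_of_mem S (Finset.mem_range.mpr (by omega))
    set A : Finset (Fin n) := Finset.univ \ Sall with hAdef
    set I : Finset (Fin n) := A.filter (fun i => i ∈ Tz) with hIdef
    set D1 : Finset (Fin n) := A.filter (fun i => i ∉ Tz) with hD1def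
    set S' : Finset (Fin n) := S t₀ \ Tz with hS'def
    have hIcard : I.card ≤ S'.card := by
      have hIsub : I ⊆ Tz \ S t₀ := by
        intro i hi
        rw [hIdef, Finset.mem_filter, hAdef, Finset.mem_sdiff] at hi
        rw [Finset.mem_sdiff]
        exact ⟨hi.2, fun hmem => hi.1.2 (hsubSall hmem)⟩
      have h1 : I.card ≤ (Tz \ S t₀).card := Finset.card_le_card hIsub
      have e1 := Finset.card_sdiff_add_card_inter Tz (S t₀)
      have e2 := Finset.card_sdiff_add_card_inter (S t₀) Tz
      have e3 : (Tz ∩ S t₀).card = (S t₀ ∩ Tz).card := by rw [Finset.inter_comm]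
      have e4 := hScard t₀ ht₀le
      rw [hS'def]
      omega
    have hdisj : Disjoint S' D1 := by
      rw [Finset.disjoint_left]
      intro a haS haD
      rw [hD1def, Finset.mem_filter, hAdef, Finset.mem_sdiff] at haD
      rw [hS'def, Finset.mem_sdiff] at haS
      exact haD.1.2 (hsubSall haS.1)
    have hgreedy : ∀ i ∈ I, ∀ k ∈ S',
        |dotp f (ψ i)| / lpNorm Q (ψ i) ≤ |dotp f (ψ k)| / lpNorm Q (ψ k) := by
      intro i hi k hk
      have hiS : i ∉ S t₀ := by
        rw [hIdef, Finset.mem_filter, hAdef, Finset.mem_sdiff] at hi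
        exact fun hmem => hi.1.2 (hsubSall hmem)
      have hkS : k ∈ S t₀ := by
        rw [hS'def, Finset.mem_sdiff] at hk
        exact hk.1
      exact hSord t₀ ht₀le k hkS i hiS
    have hWp : ∀ i, ∑ j, |ψ i j| ^ pr = (lpNorm p (ψ i)) ^ pr := by
      intro i
      rw [S9.lpNorm_ne_top' hpt, S9.np_rpow _ hpr0.ne']
    have hres : ∀ j, f j - fu j = ∑ i ∈ A, dotp f (ψ i) * ψ i j := by
      intro j
      rw [hAdef, Finset.sum_sdiff_eq_sub (Finset.subset_univ Sall), hexp j, ← hfu j]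
    set E := lpNorm p g with hEdef
    have hE0 : 0 ≤ E := S9.lpNorm_nonneg' _ _
    have hEpr : E ^ pr = ∑ j, |g j| ^ pr := by
      rw [hEdef, S9.lpNorm_ne_top' hpt, S9.np_rpow _ hpr0.ne']
    have hlemD : ∑ i, (|dotp g (ψ i)| / lpNorm p' (ψ i)) ^ pr
        ≤ (K:ℝ) * ∑ j, |g j| ^ pr := by
      rcases hPalt with ⟨hpeq, hp'top⟩ | ⟨hp'ne, hpcj⟩
      · have hpr1' : pr = 1 := by rw [hprdef, hpeq]; simp
        simp only [hp'top, S9.lpNorm_top', hpr1', Real.rpow_one]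
        exact S9.lemD1 ψ hKf (fun i => by
          obtain ⟨j, hj⟩ := hψnz i
          exact lt_of_lt_of_le (abs_pos.mpr hj)
            (le_ciSup (f := fun j' => |ψ i j'|) (Finite.bddAbove_range _) j)) g
      · exact S9.lemDp ψ hKf hpcj (fun i => lpNorm p' (ψ i))
          (fun i => S9.lpNorm_ne_top' hp'ne (ψ i)) hwp' g
    -- sum over D1
    have subD : ∑ i ∈ D1, |dotp f (ψ i)| ^ pr * (∑ j, |ψ i j| ^ pr)
        ≤ M ^ pr * ∑ i ∈ D1, (|dotp g (ψ i)| / lpNorm p' (ψ i)) ^ pr := by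
      rw [Finset.mul_sum]
      apply Finset.sum_le_sum
      intro i hi
      have hzi : z i = 0 := by
        rw [hD1def, Finset.mem_filter, hTzdef] at hi
        by_contra hne
        exact hi.2 (Finset.mem_filter.mpr ⟨Finset.mem_univ i, hne⟩)
      have hdg : dotp g (ψ i) = dotp f (ψ i) := by rw [hgc i, hzi, sub_zero]
      rw [hWp i, hdg,
        ← Real.mul_rpow (abs_nonneg _) (S9.lpNorm_nonneg' _ _),
        ← Real.mul_rpow hM0.le (div_nonneg (abs_nonneg _) (S9.lpNorm_nonneg' _ _))]
      apply Real.rpow_le_rpow (mul_nonneg (abs_nonneg _) (S9.lpNorm_nonneg' _ _)) _ hpr0.le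
      have h1 : |dotp f (ψ i)| * lpNorm p (ψ i)
          = (|dotp f (ψ i)| / lpNorm p' (ψ i)) * (lpNorm p' (ψ i) * lpNorm p (ψ i)) := by
        rw [div_mul_eq_mul_div, eq_div_iff (hwp' i).ne']
        ring
      rw [h1]
      calc (|dotp f (ψ i)| / lpNorm p' (ψ i)) * (lpNorm p' (ψ i) * lpNorm p (ψ i))
          ≤ (|dotp f (ψ i)| / lpNorm p' (ψ i)) * M := by
            apply mul_le_mul_of_nonneg_left _
              (div_nonneg (abs_nonneg _) (S9.lpNorm_nonneg' _ _))
            rw [mul_comm]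
            exact hMp i
        _ = M * (|dotp f (ψ i)| / lpNorm p' (ψ i)) := mul_comm _ _
    -- sum over I
    have subI : ∑ i ∈ I, |dotp f (ψ i)| ^ pr * (∑ j, |ψ i j| ^ pr)
        ≤ (2*M) ^ pr * ∑ k ∈ S', (|dotp g (ψ k)| / lpNorm p' (ψ k)) ^ pr := by
      have stepA : ∑ i ∈ I, |dotp f (ψ i)| ^ pr * (∑ j, |ψ i j| ^ pr)
          ≤ M ^ pr * ∑ i ∈ I, (|dotp f (ψ i)| / lpNorm Q (ψ i)) ^ pr := by
        rw [Finset.mul_sum]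
        apply Finset.sum_le_sum
        intro i _
        rw [hWp i,
          ← Real.mul_rpow (abs_nonneg _) (S9.lpNorm_nonneg' _ _),
          ← Real.mul_rpow hM0.le (div_nonneg (abs_nonneg _) (S9.lpNorm_nonneg' _ _))]
        apply Real.rpow_le_rpow (mul_nonneg (abs_nonneg _) (S9.lpNorm_nonneg' _ _)) _ hpr0.le
        have h1 : |dotp f (ψ i)| * lpNorm p (ψ i)
            = (|dotp f (ψ i)| / lpNorm Q (ψ i)) * (lpNorm Q (ψ i) * lpNorm p (ψ i)) := by
          rw [div_mul_eq_mul_div, eq_div_iff (hwq i).ne']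
          ring
        rw [h1]
        calc (|dotp f (ψ i)| / lpNorm Q (ψ i)) * (lpNorm Q (ψ i) * lpNorm p (ψ i))
            ≤ (|dotp f (ψ i)| / lpNorm Q (ψ i)) * M := by
              apply mul_le_mul_of_nonneg_left _
                (div_nonneg (abs_nonneg _) (S9.lpNorm_nonneg' _ _))
              rw [mul_comm]
              exact hMq i
          _ = M * (|dotp f (ψ i)| / lpNorm Q (ψ i)) := mul_comm _ _
      have stepB : ∑ i ∈ I, (|dotp f (ψ i)| / lpNorm Q (ψ i)) ^ pr
          ≤ ∑ k ∈ S', (|dotp f (ψ k)| / lpNorm Q (ψ k)) ^ pr := by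
        have hval0 : ∀ k : Fin n, 0 ≤ (|dotp f (ψ k)| / lpNorm Q (ψ k)) ^ pr := fun k =>
          Real.rpow_nonneg (div_nonneg (abs_nonneg _) (S9.lpNorm_nonneg' _ _)) _
        rcases Finset.eq_empty_or_nonempty I with hIe | hIne
        · rw [hIe, Finset.sum_empty]
          exact Finset.sum_nonneg fun k _ => hval0 k
        · have hS'ne : S'.Nonempty :=
            Finset.card_pos.mp (lt_of_lt_of_le (Finset.card_pos.mpr hIne) hIcard)
          obtain ⟨k0, hk0, hmin⟩ :=
            S'.exists_min_image (fun k => (|dotp f (ψ k)| / lpNorm Q (ψ k)) ^ pr) hS'ne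
          calc ∑ i ∈ I, (|dotp f (ψ i)| / lpNorm Q (ψ i)) ^ pr
              ≤ I.card • ((|dotp f (ψ k0)| / lpNorm Q (ψ k0)) ^ pr) := by
                apply Finset.sum_le_card_nsmul
                intro i hi
                exact Real.rpow_le_rpow
                  (div_nonneg (abs_nonneg _) (S9.lpNorm_nonneg' _ _))
                  (hgreedy i hi k0 hk0) hpr0.le
            _ ≤ S'.card • ((|dotp f (ψ k0)| / lpNorm Q (ψ k0)) ^ pr) := by
                rw [nsmul_eq_mul, nsmul_eq_mul]
                exact mul_le_mul_of_nonneg_right (by exact_mod_cast hIcard) (hval0 k0)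
            _ ≤ ∑ k ∈ S', (|dotp f (ψ k)| / lpNorm Q (ψ k)) ^ pr :=
                Finset.card_nsmul_le_sum _ _ _ (fun k hk => hmin k hk)
      have stepC : ∑ k ∈ S', (|dotp f (ψ k)| / lpNorm Q (ψ k)) ^ pr
          ≤ 2 ^ pr * ∑ k ∈ S', (|dotp g (ψ k)| / lpNorm p' (ψ k)) ^ pr := by
        rw [Finset.mul_sum]
        apply Finset.sum_le_sum
        intro k hk
        have hzk : z k = 0 := by
          rw [hS'def, Finset.mem_sdiff, hTzdef] at hk
          by_contra hne
          exact hk.2 (Finset.mem_filter.mpr ⟨Finset.mem_univ k, hne⟩)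
        have hdg : dotp g (ψ k) = dotp f (ψ k) := by rw [hgc k, hzk, sub_zero]
        rw [hdg,
          ← Real.mul_rpow (by norm_num : (0:ℝ) ≤ 2)
            (div_nonneg (abs_nonneg _) (S9.lpNorm_nonneg' _ _))]
        apply Real.rpow_le_rpow
          (div_nonneg (abs_nonneg _) (S9.lpNorm_nonneg' _ _)) _ hpr0.le
        rw [div_le_iff₀ (hwq k)]
        have h3 : 2 * (|dotp f (ψ k)| / lpNorm p' (ψ k)) * lpNorm Q (ψ k)
            = (|dotp f (ψ k)| * (2 * lpNorm Q (ψ k))) / lpNorm p' (ψ k) := by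
          ring
        rw [h3, le_div_iff₀ (hwp' k)]
        exact mul_le_mul_of_nonneg_left (hcmp k) (abs_nonneg _)
      calc ∑ i ∈ I, |dotp f (ψ i)| ^ pr * (∑ j, |ψ i j| ^ pr)
          ≤ M ^ pr * ∑ i ∈ I, (|dotp f (ψ i)| / lpNorm Q (ψ i)) ^ pr := stepA
        _ ≤ M ^ pr * (2 ^ pr * ∑ k ∈ S', (|dotp g (ψ k)| / lpNorm p' (ψ k)) ^ pr) := by
            apply mul_le_mul_of_nonneg_left (stepB.trans stepC) (by positivity)
        _ = (2*M) ^ pr * ∑ k ∈ S', (|dotp g (ψ k)| / lpNorm p' (ψ k)) ^ pr := by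
            rw [Real.mul_rpow (by norm_num : (0:ℝ) ≤ 2) hM0.le]
            ring
    -- assemble
    have hval0' : ∀ i : Fin n, 0 ≤ (|dotp g (ψ i)| / lpNorm p' (ψ i)) ^ pr := fun i =>
      Real.rpow_nonneg (div_nonneg (abs_nonneg _) (S9.lpNorm_nonneg' _ _)) _
    have h2M : M ^ pr ≤ (2*M) ^ pr :=
      Real.rpow_le_rpow hM0.le (by linarith) hpr0.le
    have hchain : (lpNorm p (fun j => f j - fu j)) ^ pr ≤ (2*M*(K:ℝ)*E) ^ pr := by
      have hstart : (lpNorm p (fun j => f j - fu j)) ^ pr = ∑ j, |f j - fu j| ^ pr := by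
        rw [S9.lpNorm_ne_top' hpt, S9.np_rpow _ hpr0.ne']
      rw [hstart]
      calc ∑ j, |f j - fu j| ^ pr
          = ∑ j, |∑ i ∈ A, dotp f (ψ i) * ψ i j| ^ pr :=
            Finset.sum_congr rfl fun j _ => by rw [hres j]
        _ ≤ ∑ j, (∑ i ∈ A, |dotp f (ψ i)| * |ψ i j|) ^ pr := by
            apply Finset.sum_le_sum
            intro j _
            apply Real.rpow_le_rpow (abs_nonneg _) _ hpr0.le
            calc |∑ i ∈ A, dotp f (ψ i) * ψ i j|
                ≤ ∑ i ∈ A, |dotp f (ψ i) * ψ i j| := Finset.abs_sum_le_sum_abs _ _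
              _ = ∑ i ∈ A, |dotp f (ψ i)| * |ψ i j| :=
                  Finset.sum_congr rfl fun i _ => abs_mul _ _
        _ ≤ (K:ℝ) ^ (pr - 1) * ∑ i ∈ A, |dotp f (ψ i)| ^ pr * (∑ j, |ψ i j| ^ pr) :=
            S9.lemB ψ hKf hpr1 A _ (fun i => abs_nonneg _)
        _ = (K:ℝ) ^ (pr - 1) * (∑ i ∈ I, |dotp f (ψ i)| ^ pr * (∑ j, |ψ i j| ^ pr)
              + ∑ i ∈ D1, |dotp f (ψ i)| ^ pr * (∑ j, |ψ i j| ^ pr)) := by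
            rw [← Finset.sum_filter_add_sum_filter_not A (fun i => i ∈ Tz)]
        _ ≤ (K:ℝ) ^ (pr - 1) *
              ((2*M) ^ pr * ∑ k ∈ S', (|dotp g (ψ k)| / lpNorm p' (ψ k)) ^ pr
               + M ^ pr * ∑ i ∈ D1, (|dotp g (ψ i)| / lpNorm p' (ψ i)) ^ pr) := by
            apply mul_le_mul_of_nonneg_left (add_le_add subI subD) (by positivity)
        _ ≤ (K:ℝ) ^ (pr - 1) *
              ((2*M) ^ pr * (∑ k ∈ S', (|dotp g (ψ k)| / lpNorm p' (ψ k)) ^ pr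
               + ∑ i ∈ D1, (|dotp g (ψ i)| / lpNorm p' (ψ i)) ^ pr)) := by
            apply mul_le_mul_of_nonneg_left _ (by positivity)
            rw [mul_add]
            apply add_le_add_right
            exact mul_le_mul_of_nonneg_right h2M
              (Finset.sum_nonneg fun i _ => hval0' i)
        _ = (K:ℝ) ^ (pr - 1) *
              ((2*M) ^ pr * ∑ i ∈ S' ∪ D1, (|dotp g (ψ i)| / lpNorm p' (ψ i)) ^ pr) := by
            rw [Finset.sum_union hdisj]
        _ ≤ (K:ℝ) ^ (pr - 1) *
              ((2*M) ^ pr * ∑ i, (|dotp g (ψ i)| / lpNorm p' (ψ i)) ^ pr) := by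
            apply mul_le_mul_of_nonneg_left _ (by positivity)
            apply mul_le_mul_of_nonneg_left _ (by positivity)
            exact Finset.sum_le_sum_of_subset_of_nonneg (Finset.subset_univ _)
              (fun i _ _ => hval0' i)
        _ ≤ (K:ℝ) ^ (pr - 1) * ((2*M) ^ pr * ((K:ℝ) * ∑ j, |g j| ^ pr)) := by
            apply mul_le_mul_of_nonneg_left _ (by positivity)
            exact mul_le_mul_of_nonneg_left hlemD (by positivity)
        _ = (2*M*(K:ℝ)*E) ^ pr := by
            have hKpow : (K:ℝ) ^ (pr-1) * (K:ℝ) ^ (1:ℝ) = (K:ℝ) ^ pr := by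
              rw [← Real.rpow_add hK0']
              norm_num
            have hK1c : (K:ℝ) ^ (1:ℝ) = (K:ℝ) := Real.rpow_one _
            calc (K:ℝ) ^ (pr - 1) * ((2*M) ^ pr * ((K:ℝ) * ∑ j, |g j| ^ pr))
                = (2*M) ^ pr * ((K:ℝ) ^ (pr-1) * (K:ℝ) ^ (1:ℝ)) * (∑ j, |g j| ^ pr) := by
                  rw [hK1c]
                  ring
              _ = (2*M) ^ pr * (K:ℝ) ^ pr * E ^ pr := by rw [hKpow, hEpr]
              _ = (2*M*(K:ℝ)*E) ^ pr := by
                  rw [Real.mul_rpow (by positivity : (0:ℝ) ≤ 2*M*(K:ℝ)) hE0,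
                    Real.mul_rpow (by positivity : (0:ℝ) ≤ 2*M) (Nat.cast_nonneg K)]
    have hXnn : 0 ≤ lpNorm p (fun j => f j - fu j) := S9.lpNorm_nonneg' _ _
    have hRnn : 0 ≤ 2*M*(K:ℝ)*E := by positivity
    by_contra hcon
    push_neg at hcon
    have hlt := Real.rpow_lt_rpow hRnn hcon hpr0
    linarith
  -- conclude via sInf
  have hne : {e : ℝ | ∃ z : Fin n → ℝ, Sparse B z ∧
      e = lpNorm p (fun j => f j - ∑ i, z i * ψ i j)}.Nonempty := by
    refine ⟨lpNorm p (fun j => f j - ∑ i, (0:ℝ) * ψ i j), 0, ?_, rfl⟩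
    unfold Sparse
    simp
  have hpos : (0:ℝ) < 2 * M * (K:ℝ) := by positivity
  have hlow : lpNorm p (fun j => f j - fu j) / (2*M*(K:ℝ)) ≤
      sInf {e : ℝ | ∃ z : Fin n → ℝ, Sparse B z ∧
        e = lpNorm p (fun j => f j - ∑ i, z i * ψ i j)} := by
    apply le_csInf hne
    rintro b ⟨z, hzs, rfl⟩
    rw [div_le_iff₀ hpos]
    calc lpNorm p (fun j => f j - fu j)
        ≤ 2*M*(K:ℝ) * lpNorm p (fun j => f j - ∑ i, z i * ψ i j) := hmain z hzs
      _ = lpNorm p (fun j => f j - ∑ i, z i * ψ i j) * (2*M*(K:ℝ)) := mul_comm _ _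
  calc lpNorm p (fun j => f j - fu j)
      = lpNorm p (fun j => f j - fu j) / (2*M*(K:ℝ)) * (2*M*(K:ℝ)) :=
        (div_mul_cancel₀ _ hpos.ne').symm
    _ ≤ sInf {e : ℝ | ∃ z : Fin n → ℝ, Sparse B z ∧
          e = lpNorm p (fun j => f j - ∑ i, z i * ψ i j)} * (2*M*(K:ℝ)) :=
        mul_le_mul_of_nonneg_right hlow hpos.le
    _ = 2 * M * (K:ℝ) * sInf {e : ℝ | ∃ z : Fin n → ℝ, Sparse B z ∧
          e = lpNorm p (fun j => f j - ∑ i, z i * ψ i j)} := mul_comm _ _
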